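/- Let c = Σ_{k≥0} k! x1^k be the Ferfera series and let e := (−c)^{∘−1} be defined by δ + e being the group inverse of δ + (−c) in the output feedback group. Then e satisfies the shuffle equation e = ∅ + x0 (e ⧢ e ⧢ e) + x1 (e ⧢ e); equivalently x0^{−1}(e) = e^{⧢3}, x1^{−1}(e) = e^{⧢2}, and ⟨e, ∅⟩ = 1. -/

import Mathlib

open scoped TensorProduct

noncomputable section

namespace Paper

/-- Words over the alphabet `X = {x0, x1}`, encoded as lists over `Fin 2`
(`0` stands for the letter `x0` and `1` for the letter `x1`). -/
abbrev Word : Type := List (Fin 2)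

/-- Formal power series `ℝ⟨⟨X⟩⟩`, given by their coefficient functions `η ↦ ⟨c,η⟩`. -/
abbrev Series : Type := Word → ℝ

/-- The left shift `x_i⁻¹(c)`. -/
def lshift (i : Fin 2) (c : Series) : Series := fun w => c (i :: w)

/-- Left concatenation `x_i c` of the letter `x_i` onto every word of `c`. -/
def lconcat (i : Fin 2) (c : Series) : Series := fun w =>
  match w with
  | [] => 0
  | j :: v => if j = i then c v else 0

/-- Right concatenation `p x_i` of the letter `x_i` onto every word of `p`. -/
def rconcat {R : Type*} [Zero R] (i : Fin 2) (p : Word → R) : Word → R := fun w =>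
  if w.getLast? = some i then p w.dropLast else 0

/-- The series of a single word. -/
def ind (η : Word) : Series := fun w => if w = η then 1 else 0

/-- The empty word as a series, the unit `∅` (often written `1`). -/
def one : Series := ind []

/-- The shuffle product, defined coefficientwise by the recursion
`⟨c ⧢ d, ∅⟩ = ⟨c,∅⟩⟨d,∅⟩` and `⟨c ⧢ d, x_i w⟩ = ⟨x_i⁻¹(c) ⧢ d, w⟩ + ⟨c ⧢ x_i⁻¹(d), w⟩`,
which is the bilinear (and ultrametrically continuous) extension of the recursive
shuffle product of words. -/
def shuffleFn : Series → Series → Word → ℝ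
  | c, d, [] => c [] * d []
  | c, d, i :: w => shuffleFn (lshift i c) d w + shuffleFn c (lshift i d) w

/-- The shuffle product on `ℝ⟨⟨X⟩⟩`. -/
def sh (c d : Series) : Series := shuffleFn c d

/-- The map `φ_d(x_i)` for the modified composition product:
`φ_d(x0)(e) = x0 e` and `φ_d(x1)(e) = x1 e + x0 (d ⧢ e)`. -/
def phiLetter (d : Series) (i : Fin 2) (e : Series) : Series :=
  if i = 0 then lconcat 0 e else lconcat 1 e + lconcat 0 (sh d e)

/-- `φ_d(η)`, the algebra-homomorphism extension determined by
`φ_d(x_i η) = φ_d(x_i) ∘ φ_d(η)` and `φ_d(∅) = id`. -/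
def phi (d : Series) : Word → Series → Series
  | [], e => e
  | i :: η, e => phiLetter d i (phi d η e)

/-- The modified composition product `c ∘̃ d = Σ_η ⟨c,η⟩ φ_d(η)(1)`. -/
def mcomp (c d : Series) : Series := fun w => ∑' η : Word, c η * phi d η one w

/-- The map `ψ_d(x_i)` for the composition product:
`ψ_d(x0)(e) = x0 e` and `ψ_d(x1)(e) = x0 (d ⧢ e)`. -/
def psiLetter (d : Series) (i : Fin 2) (e : Series) : Series :=
  if i = 0 then lconcat 0 e else lconcat 0 (sh d e)

/-- `ψ_d(η)`, determined by `ψ_d(x_i η) = ψ_d(x_i) ∘ ψ_d(η)` and `ψ_d(∅) = id`. -/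
def psi (d : Series) : Word → Series → Series
  | [], e => e
  | i :: η, e => psiLetter d i (psi d η e)

/-- The composition product `c ∘ d = Σ_η ⟨c,η⟩ ψ_d(η)(1)`. -/
def comp (c d : Series) : Series := fun w => ∑' η : Word, c η * psi d η one w

/-- The group operation on `ℝ⟨⟨X_δ⟩⟩ = {δ + c}`, transported to the `c`-parts:
`c_δ ∘ d_δ = δ + (d + c ∘̃ d)`. -/
def gop (c d : Series) : Series := d + mcomp c d

/-- The Ferfera series `c = Σ_{k ≥ 0} k! x1^k`. -/
def ferfera : Series := fun w =>
  if w = List.replicate w.length (1 : Fin 2) then (Nat.factorial w.length : ℝ) else 0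

/-- The degree of a word, `deg(η) = 2|η|_{x0} + |η|_{x1} + 1`. -/
def degW (η : Word) : ℕ := 2 * η.count 0 + η.count 1 + 1

/-- The output feedback Hopf algebra `H`: the free unital commutative `ℝ`-algebra on the
coordinate functions `a_η`, realized as polynomials in commuting variables indexed by words. -/
abbrev H : Type := MvPolynomial Word ℝ

/-- The coordinate function `a_η`. -/
def aw (η : Word) : H := MvPolynomial.X η

/-- Character (pointwise) evaluation of elements of `H` at a series `c`:
`(a_{η₁} ⋯ a_{η_l})(c) = ⟨c,η₁⟩ ⋯ ⟨c,η_l⟩`, extended as an algebra map. -/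
def evalS (c : Series) : H →ₐ[ℝ] ℝ := MvPolynomial.aeval c

/-- Evaluation of `H ⊗ H` at a pair of series: `(p ⊗ q)(c,d) = p(c) q(d)`. -/
def evalPair (c d : Series) : H ⊗[ℝ] H →ₗ[ℝ] ℝ :=
  (LinearMap.mul' ℝ ℝ).comp (TensorProduct.map (evalS c).toLinearMap (evalS d).toLinearMap)

/-- The counit `ε` of `H`: `ε(a_η) = 0`, `ε(1) = 1`. -/
def counit : H →ₐ[ℝ] ℝ := evalS 0

/-- The defining property of the full coproduct `Δ` of the output feedback Hopf algebra:
`Δ a_η = Δ̃ a_η + 1 ⊗ a_η` where `Δ̃ a_η (c,d) = ⟨c ∘̃ d, η⟩`, i.e.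
`(Δ a_η)(c,d) = ⟨c ∘̃ d, η⟩ + ⟨d, η⟩` for all series `c, d`; `Δ` is an algebra morphism. -/
def IsFBCoproduct (Δ : H →ₐ[ℝ] (H ⊗[ℝ] H)) : Prop :=
  ∀ (η : Word) (c d : Series), evalPair c d (Δ (aw η)) = mcomp c d η + d η

/-- `S` is an antipode for the coproduct `Δ` (with counit `ε`):
`μ ∘ (S ⊗ id) ∘ Δ = 1·ε = μ ∘ (id ⊗ S) ∘ Δ`. -/
def IsAntipode (Δ : H →ₐ[ℝ] (H ⊗[ℝ] H)) (S : H →ₗ[ℝ] H) : Prop :=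
  (∀ p : H, LinearMap.mul' ℝ H (TensorProduct.map S LinearMap.id (Δ p)) = counit p • 1) ∧
  (∀ p : H, LinearMap.mul' ℝ H (TensorProduct.map LinearMap.id S (Δ p)) = counit p • 1)

/-- The right-augmentation operator `θ̃_i`, the derivation on `H` with `θ̃_i(a_η) = a_{η x_i}`. -/
def thetaR (i : Fin 2) : Derivation ℝ H H :=
  MvPolynomial.mkDerivation ℝ fun η => aw (η ++ [i])

/-- The left-augmentation operator `θ_i`, the derivation on `H` with `θ_i(a_η) = a_{x_i η}`. -/
def thetaL (i : Fin 2) : Derivation ℝ H H :=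
  MvPolynomial.mkDerivation ℝ fun η => aw (i :: η)

/-- The multiplication operator `κ_∅(h) = h · a_∅`. -/
def kappaE : H →ₗ[ℝ] H := LinearMap.mulRight ℝ (aw [])

/-- The shuffle coefficient `⟨ξ ⧢ ν, η⟩`. -/
def shCoeff (ξ ν η : Word) : ℝ := sh (ind ξ) (ind ν) η

/-- The finite set of words of length `n`. -/
def wordsLen (n : ℕ) : Finset Word :=
  (Finset.univ : Finset (Fin n → Fin 2)).image List.ofFn

/-- The deshuffle coproduct `Δ_⧢ a_η = Σ_{ξ,ν} ⟨ξ ⧢ ν, η⟩ a_ξ ⊗ a_ν`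
(the unique coproduct satisfying `Δ_⧢ a_∅ = a_∅ ⊗ a_∅` and the coderivation recursions
with respect to the augmentation operators). -/
def deshuffle (η : Word) : H ⊗[ℝ] H :=
  ∑ k ∈ Finset.range (η.length + 1), ∑ ξ ∈ wordsLen k, ∑ ν ∈ wordsLen (η.length - k),
    shCoeff ξ ν η • (aw ξ ⊗ₜ[ℝ] aw ν)

/-- Iterated integrals: `E_∅[u](t) = 1`, `E_{x_i η}[u](t) = ∫₀ᵗ u_i(s) E_η[u](s) ds`. -/
def E (u : Fin 2 → ℝ → ℝ) : Word → ℝ → ℝ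
  | [], _ => 1
  | i :: η, t => ∫ s in (0:ℝ)..t, u i s * E u η s

end Paper

namespace Paper
-- ===================== auxiliary development =====================

lemma shuffleFn_nil (c d : Series) : shuffleFn c d [] = c [] * d [] := rfl

lemma shuffleFn_cons (c d : Series) (i : Fin 2) (w : Word) :
    shuffleFn c d (i :: w) = shuffleFn (lshift i c) d w + shuffleFn c (lshift i d) w := rfl

lemma lshift_zero (i : Fin 2) : lshift i (0 : Series) = 0 := rfl
lemma lshift_add (i : Fin 2) (c d : Series) : lshift i (c + d) = lshift i c + lshift i d := rfl

lemma sh_zero_left : ∀ (w : Word) (d : Series), shuffleFn 0 d w = 0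
  | [], d => by simp [shuffleFn_nil]
  | i :: w, d => by
      rw [shuffleFn_cons, lshift_zero, sh_zero_left w, sh_zero_left w, add_zero]

lemma sh_zero_right : ∀ (w : Word) (c : Series), shuffleFn c 0 w = 0
  | [], c => by simp [shuffleFn_nil]
  | i :: w, c => by
      rw [shuffleFn_cons, lshift_zero, sh_zero_right w, sh_zero_right w, add_zero]

lemma sh_add_left : ∀ (w : Word) (c c' d : Series),
    shuffleFn (c + c') d w = shuffleFn c d w + shuffleFn c' d w
  | [], c, c', d => by simp [shuffleFn_nil]; ring
  | i :: w, c, c', d => by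
      rw [shuffleFn_cons, lshift_add, sh_add_left w, sh_add_left w,
        shuffleFn_cons, shuffleFn_cons]; ring

lemma sh_add_right : ∀ (w : Word) (c d d' : Series),
    shuffleFn c (d + d') w = shuffleFn c d w + shuffleFn c d' w
  | [], c, d, d' => by simp [shuffleFn_nil]; ring
  | i :: w, c, d, d' => by
      rw [shuffleFn_cons, lshift_add, sh_add_right w, sh_add_right w,
        shuffleFn_cons, shuffleFn_cons]; ring

lemma lshift_const_mul (i : Fin 2) (r : ℝ) (d : Series) :
    lshift i (fun v => r * d v) = fun v => r * lshift i d v := rfl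

lemma sh_const_mul_right : ∀ (w : Word) (c d : Series) (r : ℝ),
    shuffleFn c (fun v => r * d v) w = r * shuffleFn c d w
  | [], c, d, r => by simp [shuffleFn_nil]; ring
  | i :: w, c, d, r => by
      rw [shuffleFn_cons, lshift_const_mul, sh_const_mul_right w, sh_const_mul_right w,
        shuffleFn_cons]; ring

lemma sh_congr : ∀ (w : Word) (c c' d d' : Series),
    (∀ v : Word, v.length ≤ w.length → c v = c' v) →
    (∀ v : Word, v.length ≤ w.length → d v = d' v) →
    shuffleFn c d w = shuffleFn c' d' w
  | [], c, c', d, d', hc, hd => by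
      rw [shuffleFn_nil, shuffleFn_nil, hc [] (by simp), hd [] (by simp)]
  | i :: w, c, c', d, d', hc, hd => by
      rw [shuffleFn_cons, shuffleFn_cons,
        sh_congr w (lshift i c) (lshift i c') d d'
          (fun v hv => hc (i :: v) (by simpa using hv))
          (fun v hv => hd v (le_trans hv (by simp))),
        sh_congr w c c' (lshift i d) (lshift i d')
          (fun v hv => hc v (le_trans hv (by simp)))
          (fun v hv => hd (i :: v) (by simpa using hv))]

lemma sh_vanish_right (w : Word) (c d : Series)
    (hd : ∀ v : Word, v.length ≤ w.length → d v = 0) : shuffleFn c d w = 0 := by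
  rw [sh_congr w c c d 0 (fun _ _ => rfl) hd, sh_zero_right]

lemma sh_comm : ∀ (w : Word) (c d : Series), shuffleFn c d w = shuffleFn d c w
  | [], c, d => by rw [shuffleFn_nil, shuffleFn_nil, mul_comm]
  | i :: w, c, d => by
      rw [shuffleFn_cons, shuffleFn_cons, sh_comm w (lshift i c) d, sh_comm w c (lshift i d),
        add_comm]

lemma sh_comm' (c d : Series) : sh c d = sh d c := funext fun w => sh_comm w c d

lemma lshift_sh (i : Fin 2) (a b : Series) :
    lshift i (sh a b) = sh (lshift i a) b + sh a (lshift i b) := rfl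

lemma sh_assoc : ∀ (w : Word) (a b c : Series),
    shuffleFn (sh a b) c w = shuffleFn a (sh b c) w
  | [], a, b, c => by
      rw [shuffleFn_nil, shuffleFn_nil]
      show (a [] * b []) * c [] = a [] * (b [] * c []); ring
  | i :: w, a, b, c => by
      rw [shuffleFn_cons, shuffleFn_cons, lshift_sh, lshift_sh, sh_add_left, sh_add_right,
        sh_assoc w (lshift i a) b c, sh_assoc w a (lshift i b) c, sh_assoc w a b (lshift i c)]
      ring

lemma sh_sum_right {α : Type*} (c : Series) (s : Finset α) (f : α → Series) (w : Word) :
    shuffleFn c (fun v => ∑ x ∈ s, f x v) w = ∑ x ∈ s, shuffleFn c (f x) w := by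
  classical
  induction s using Finset.induction with
  | empty => exact sh_zero_right w c
  | insert a s hx ih =>
      have h1 : (fun v => ∑ x ∈ insert a s, f x v) = f a + fun v => ∑ x ∈ s, f x v := by
        funext v; simp [Finset.sum_insert hx]
      rw [h1, sh_add_right, ih, Finset.sum_insert hx]

-- words finsets

lemma mem_wordsLen (η : Word) : η ∈ wordsLen η.length :=
  Finset.mem_image.mpr ⟨η.get, Finset.mem_univ _, List.ofFn_get η⟩

lemma length_of_mem_wordsLen {η : Word} {k : ℕ} (h : η ∈ wordsLen k) : η.length = k := by
  rcases Finset.mem_image.mp h with ⟨f, _, rfl⟩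
  simp

def WLE (n : ℕ) : Finset Word := (Finset.range (n + 1)).biUnion wordsLen

lemma mem_WLE {η : Word} {n : ℕ} (h : η.length ≤ n) : η ∈ WLE n :=
  Finset.mem_biUnion.mpr ⟨η.length, Finset.mem_range.mpr (by omega), mem_wordsLen η⟩

lemma length_le_of_mem_WLE {η : Word} {n : ℕ} (h : η ∈ WLE n) : η.length ≤ n := by
  rcases Finset.mem_biUnion.mp h with ⟨k, hk, hη⟩
  have := length_of_mem_wordsLen hη
  have := Finset.mem_range.mp hk
  omega

-- phi support

lemma phi_nil (d : Series) : phi d [] one = one := rfl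
lemma phi_cons (d : Series) (i : Fin 2) (η : Word) :
    phi d (i :: η) one = phiLetter d i (phi d η one) := rfl

lemma phi_support : ∀ (η : Word) (d : Series) (w : Word),
    w.length < η.length → phi d η one w = 0
  | [], d, w, h => by simp at h
  | i :: η, d, w, h => by
      rw [phi_cons, phiLetter]
      have hg : ∀ v : Word, v.length < η.length → phi d η one v = 0 :=
        fun v hv => phi_support η d v hv
      by_cases hi : i = 0
      · rw [if_pos hi]
        match w, h with
        | [], _ => rfl
        | j :: v, h =>
            show (if j = 0 then phi d η one v else 0) = 0
            by_cases hj : j = 0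
            · rw [if_pos hj, hg v (by simpa using h)]
            · rw [if_neg hj]
      · rw [if_neg hi]
        match w, h with
        | [], _ => show (0:ℝ) + 0 = 0; norm_num
        | j :: v, h =>
            have hv : v.length < η.length := by simpa using h
            show (if j = 1 then phi d η one v else 0)
              + (if j = 0 then sh d (phi d η one) v else 0) = 0
            have h1 : (if j = 1 then phi d η one v else 0) = 0 := by
              by_cases hj : j = 1
              · rw [if_pos hj, hg v hv]
              · rw [if_neg hj]
            have h2 : (if j = 0 then sh d (phi d η one) v else 0) = 0 := by
              by_cases hj : j = 0
              · rw [if_pos hj]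
                exact sh_vanish_right v d _ (fun u hu => hg u (lt_of_le_of_lt hu hv))
              · rw [if_neg hj]
            rw [h1, h2, add_zero]

lemma mcomp_summable (c d : Series) (w : Word) :
    Summable (fun η : Word => c η * phi d η one w) := by
  apply summable_of_ne_finset_zero (s := WLE w.length)
  intro η hη
  have : w.length < η.length := by
    by_contra h
    exact hη (mem_WLE (by omega))
  rw [phi_support η d w this, mul_zero]

lemma mcomp_eq_sum (c d : Series) (w : Word) :
    mcomp c d w = ∑ η ∈ WLE w.length, c η * phi d η one w := by
  apply tsum_eq_sum
  intro η hη
  have : w.length < η.length := by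
    by_contra h
    exact hη (mem_WLE (by omega))
  rw [phi_support η d w this, mul_zero]

lemma mcomp_neg (c d : Series) : mcomp (-c) d = -(mcomp c d) := by
  funext w
  show (∑' η : Word, (-c) η * phi d η one w) = -(∑' η : Word, c η * phi d η one w)
  rw [← tsum_neg]
  congr 1; funext η
  show (-(c η)) * _ = -(c η * _)
  ring

lemma mcomp_add_left (a b d : Series) : mcomp (a + b) d = mcomp a d + mcomp b d := by
  funext w
  show (∑' η : Word, (a + b) η * phi d η one w) = _
  have : (fun η : Word => (a + b) η * phi d η one w)
      = fun η => a η * phi d η one w + b η * phi d η one w := by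
    funext η; show (a η + b η) * _ = _; ring
  rw [this, Summable.tsum_add (mcomp_summable a d w) (mcomp_summable b d w)]
  rfl

lemma mcomp_zero_left (d : Series) : mcomp 0 d = 0 := by
  funext w
  show (∑' η : Word, (0 : Series) η * phi d η one w) = 0
  simp

lemma one_cons (i : Fin 2) (w : Word) : one (i :: w) = 0 := by
  simp [one, ind]

lemma cons_injective (i : Fin 2) : Function.Injective (fun η : Word => i :: η) := by
  intro a b h; simpa using h

lemma tsum_cons (i : Fin 2) (f : Word → ℝ)
    (h : ∀ μ : Word, (∀ η : Word, μ ≠ i :: η) → f μ = 0) :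
    (∑' η : Word, f (i :: η)) = ∑' μ : Word, f μ := by
  apply Function.Injective.tsum_eq (cons_injective i)
  intro μ hμ
  by_contra hr
  refine hμ (h μ fun η hη => hr ?_)
  exact ⟨η, hη.symm⟩

lemma mcomp_cons_one (c d : Series) (w : Word) :
    mcomp c d (1 :: w) = mcomp (lshift 1 c) d w := by
  show (∑' η : Word, c η * phi d η one (1 :: w)) = ∑' η : Word, c (1 :: η) * phi d η one w
  symm
  have key : ∀ η : Word, c (1 :: η) * phi d η one w
      = c (1 :: η) * phi d (1 :: η) one (1 :: w) := by
    intro η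
    rw [phi_cons, phiLetter, if_neg (by decide : (1 : Fin 2) ≠ 0)]
    show _ = c (1 :: η) * ((if (1 : Fin 2) = 1 then phi d η one w else 0)
      + (if (1 : Fin 2) = 0 then sh d (phi d η one) w else 0))
    simp
  calc (∑' η : Word, c (1 :: η) * phi d η one w)
      = ∑' η : Word, c (1 :: η) * phi d (1 :: η) one (1 :: w) := by
        congr 1; funext η; exact key η
    _ = ∑' η : Word, c η * phi d η one (1 :: w) := by
        apply tsum_cons 1 (fun μ => c μ * phi d μ one (1 :: w))
        intro μ hμ
        match μ with
        | [] => rw [phi_nil, one_cons, mul_zero]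
        | (0 : Fin 2) :: η =>
            rw [phi_cons, phiLetter, if_pos rfl]
            show c _ * (if (1 : Fin 2) = 0 then phi d η one w else 0) = 0
            simp
        | (1 : Fin 2) :: η => exact absurd rfl (hμ η)

lemma mcomp_cons_zero (c d : Series) (w : Word) :
    mcomp c d (0 :: w) = mcomp (lshift 0 c) d w + sh d (mcomp (lshift 1 c) d) w := by
  classical
  set g0 : Word → ℝ := fun μ =>
    match μ with
    | (0 : Fin 2) :: η => c μ * phi d η one w
    | _ => 0 with hg0
  set g1 : Word → ℝ := fun μ =>
    match μ with
    | (1 : Fin 2) :: η => c μ * sh d (phi d η one) w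
    | _ => 0 with hg1
  have hsplit : ∀ μ : Word, c μ * phi d μ one (0 :: w) = g0 μ + g1 μ := by
    intro μ
    match μ with
    | [] => simp [hg0, hg1, phi_nil, one_cons]
    | (0 : Fin 2) :: η =>
        rw [phi_cons, phiLetter, if_pos rfl]
        show c _ * (if (0 : Fin 2) = 0 then phi d η one w else 0) = _ + _
        simp [hg0, hg1]
    | (1 : Fin 2) :: η =>
        rw [phi_cons, phiLetter, if_neg (by decide : (1 : Fin 2) ≠ 0)]
        show c _ * ((if (0 : Fin 2) = 1 then phi d η one w else 0)
          + (if (0 : Fin 2) = 0 then sh d (phi d η one) w else 0)) = _ + _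
        simp [hg0, hg1]
  have hsum0 : Summable g0 := by
    apply summable_of_ne_finset_zero (s := WLE (w.length + 1))
    intro μ hμ
    have hlen : w.length + 1 < μ.length := by
      by_contra h; exact hμ (mem_WLE (by omega))
    match μ with
    | [] => rfl
    | (0 : Fin 2) :: η =>
        show c _ * phi d η one w = 0
        rw [phi_support η d w (by simpa using hlen), mul_zero]
    | (1 : Fin 2) :: η => rfl
  have hsum1 : Summable g1 := by
    apply summable_of_ne_finset_zero (s := WLE (w.length + 1))
    intro μ hμ
    have hlen : w.length + 1 < μ.length := by
      by_contra h; exact hμ (mem_WLE (by omega))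
    match μ with
    | [] => rfl
    | (0 : Fin 2) :: η => rfl
    | (1 : Fin 2) :: η =>
        show c _ * shuffleFn d (phi d η one) w = 0
        have hη : w.length < η.length := by simpa using hlen
        rw [sh_vanish_right w d _ (fun u hu => phi_support η d u (by omega)), mul_zero]
  have h0 : (∑' μ : Word, g0 μ) = mcomp (lshift 0 c) d w := by
    rw [show mcomp (lshift 0 c) d w = ∑' η : Word, c (0 :: η) * phi d η one w from rfl]
    symm
    apply tsum_cons 0 g0
    intro μ hμ
    match μ with
    | [] => rfl
    | (0 : Fin 2) :: η => exact absurd rfl (hμ η)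
    | (1 : Fin 2) :: η => rfl
  have h1 : (∑' μ : Word, g1 μ) = sh d (mcomp (lshift 1 c) d) w := by
    have e1 : (∑' μ : Word, g1 μ) = ∑' η : Word, c (1 :: η) * sh d (phi d η one) w := by
      symm
      apply tsum_cons 1 g1
      intro μ hμ
      match μ with
      | [] => rfl
      | (0 : Fin 2) :: η => rfl
      | (1 : Fin 2) :: η => exact absurd rfl (hμ η)
    have e2 : (∑' η : Word, c (1 :: η) * sh d (phi d η one) w)
        = ∑ η ∈ WLE w.length, c (1 :: η) * sh d (phi d η one) w := by
      apply tsum_eq_sum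
      intro η hη
      have hlen : w.length < η.length := by
        by_contra h; exact hη (mem_WLE (by omega))
      show c (1 :: η) * shuffleFn d (phi d η one) w = 0
      rw [sh_vanish_right w d _ (fun u hu => phi_support η d u (by omega)), mul_zero]
    have e3 : sh d (mcomp (lshift 1 c) d) w
        = ∑ η ∈ WLE w.length, c (1 :: η) * sh d (phi d η one) w := by
      have agree : ∀ v : Word, v.length ≤ w.length →
          mcomp (lshift 1 c) d v
            = ∑ η ∈ WLE w.length, c (1 :: η) * phi d η one v := by
        intro v hv
        rw [mcomp_eq_sum]
        apply Finset.sum_subset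
        · intro η hη; exact mem_WLE (le_trans (length_le_of_mem_WLE hη) hv)
        · intro η hη hne
          have : v.length < η.length := by
            by_contra h; exact hne (mem_WLE (by omega))
          rw [phi_support η d v this, mul_zero]
      calc sh d (mcomp (lshift 1 c) d) w
          = shuffleFn d (fun v => ∑ η ∈ WLE w.length, c (1 :: η) * phi d η one v) w :=
            sh_congr w d d _ _ (fun _ _ => rfl) agree
        _ = ∑ η ∈ WLE w.length, shuffleFn d (fun v => c (1 :: η) * phi d η one v) w :=
            sh_sum_right d _ _ w
        _ = ∑ η ∈ WLE w.length, c (1 :: η) * sh d (phi d η one) w := by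
            apply Finset.sum_congr rfl
            intro η _
            exact sh_const_mul_right w d (phi d η one) (c (1 :: η))
    rw [e1, e2, ← e3]
  calc mcomp c d (0 :: w) = ∑' μ : Word, (g0 μ + g1 μ) := by
        show (∑' μ : Word, c μ * phi d μ one (0 :: w)) = _
        congr 1; funext μ; exact hsplit μ
    _ = (∑' μ : Word, g0 μ) + ∑' μ : Word, g1 μ := Summable.tsum_add hsum0 hsum1
    _ = _ := by rw [h0, h1]

lemma mcomp_nil (c d : Series) : mcomp c d [] = c [] := by
  show (∑' η : Word, c η * phi d η one []) = c []
  rw [tsum_eq_single ([] : Word)]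
  · show c [] * one [] = c []
    simp [one, ind]
  · intro η hη
    rw [phi_support η d [] (by cases η with | nil => exact absurd rfl hη | cons i t => simp),
      mul_zero]

lemma lshift_one_mcomp (c d : Series) :
    lshift 1 (mcomp c d) = mcomp (lshift 1 c) d :=
  funext fun w => mcomp_cons_one c d w

lemma lshift_zero_mcomp (c d : Series) :
    lshift 0 (mcomp c d) = mcomp (lshift 0 c) d + sh d (mcomp (lshift 1 c) d) :=
  funext fun w => mcomp_cons_zero c d w

-- the shuffle-homomorphism lemma

lemma mcomp_hom (d : Series) : ∀ (n : ℕ) (w : Word), w.length ≤ n → ∀ a b : Series,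
    shuffleFn (mcomp a d) (mcomp b d) w = mcomp (sh a b) d w := by
  intro n
  induction n with
  | zero =>
      intro w hw a b
      match w, hw with
      | [], _ =>
          rw [shuffleFn_nil, mcomp_nil, mcomp_nil, mcomp_nil]
          rfl
  | succ n ih =>
      intro w hw a b
      match w with
      | [] =>
          rw [shuffleFn_nil, mcomp_nil, mcomp_nil, mcomp_nil]
          rfl
      | (1 : Fin 2) :: v =>
          have hv : v.length ≤ n := by simpa using hw
          rw [shuffleFn_cons, lshift_one_mcomp, lshift_one_mcomp, ih v hv, ih v hv,
            ← Pi.add_apply, ← mcomp_add_left, ← lshift_sh, ← lshift_one_mcomp]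
          rfl
      | (0 : Fin 2) :: v =>
          have hv : v.length ≤ n := by simpa using hw
          rw [shuffleFn_cons, lshift_zero_mcomp, lshift_zero_mcomp]
          rw [sh_add_left, sh_add_right]
          have t1 : shuffleFn (mcomp (lshift 0 a) d) (mcomp b d) v
              = mcomp (sh (lshift 0 a) b) d v := ih v hv (lshift 0 a) b
          have t2 : shuffleFn (sh d (mcomp (lshift 1 a) d)) (mcomp b d) v
              = shuffleFn d (mcomp (sh (lshift 1 a) b) d) v := by
            rw [sh_assoc]
            apply sh_congr v d d _ _ (fun _ _ => rfl)
            intro u hu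
            exact ih u (le_trans hu hv) (lshift 1 a) b
          have t3 : shuffleFn (mcomp a d) (mcomp (lshift 0 b) d) v
              = mcomp (sh a (lshift 0 b)) d v := ih v hv a (lshift 0 b)
          have t4 : shuffleFn (mcomp a d) (sh d (mcomp (lshift 1 b) d)) v
              = shuffleFn d (mcomp (sh a (lshift 1 b)) d) v := by
            rw [sh_comm, sh_assoc]
            apply sh_congr v d d _ _ (fun _ _ => rfl)
            intro u hu
            show shuffleFn (mcomp (lshift 1 b) d) (mcomp a d) u
              = mcomp (sh a (lshift 1 b)) d u
            rw [ih u (le_trans hu hv) (lshift 1 b) a, sh_comm' (lshift 1 b) a]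
          rw [t1, t2, t3, t4]
          have hr : shuffleFn d (mcomp (sh (lshift 1 a) b) d) v
                + shuffleFn d (mcomp (sh a (lshift 1 b)) d) v
              = shuffleFn d (mcomp (lshift 1 (sh a b)) d) v := by
            rw [lshift_sh, mcomp_add_left, ← sh_add_right]
          have hl : mcomp (sh (lshift 0 a) b) d v + mcomp (sh a (lshift 0 b)) d v
              = mcomp (lshift 0 (sh a b)) d v := by
            rw [lshift_sh, mcomp_add_left]; rfl
          have : mcomp (sh a b) d ((0 : Fin 2) :: v)
              = mcomp (lshift 0 (sh a b)) d v + shuffleFn d (mcomp (lshift 1 (sh a b)) d) v :=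
            mcomp_cons_zero (sh a b) d v
          rw [this, ← hr, ← hl]
          ring

-- the Ferfera series family

def G (a : ℕ) : Series := fun w =>
  if w = List.replicate w.length (1 : Fin 2) then ((w.length + a).factorial : ℝ) else 0

lemma ferfera_eq_G : ferfera = G 0 := by
  funext w; simp [ferfera, G]

lemma lshift_one_G (a : ℕ) : lshift 1 (G a) = G (a + 1) := by
  funext w
  show G a (1 :: w) = G (a + 1) w
  unfold G
  have hc : ((1 : Fin 2) :: w = List.replicate ((1 :: w : Word)).length 1)
      ↔ (w = List.replicate w.length 1) := by
    simp [List.replicate_succ]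
  by_cases h : w = List.replicate w.length (1 : Fin 2)
  · rw [if_pos (hc.mpr h), if_pos h]
    have hn : ((1 :: w : Word)).length + a = w.length + (a + 1) := by
      simp; omega
    rw [hn]
  · rw [if_neg (fun hh => h (hc.mp hh)), if_neg h]

lemma lshift_zero_G (a : ℕ) : lshift 0 (G a) = 0 := by
  funext w
  show G a (0 :: w) = 0
  unfold G
  rw [if_neg]
  simp [List.replicate_succ]

def Sval (a b n : ℕ) : ℝ :=
  ((a + b + n + 1).factorial : ℝ) * a.factorial * b.factorial / (a + b + 1).factorial

lemma Sval_zero (a b : ℕ) : Sval a b 0 = (a.factorial : ℝ) * b.factorial := by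
  unfold Sval
  rw [add_zero]
  have h : ((a + b + 1).factorial : ℝ) ≠ 0 := by
    exact_mod_cast Nat.factorial_ne_zero _
  field_simp

lemma Sval_rec (a b n : ℕ) : Sval (a + 1) b n + Sval a (b + 1) n = Sval a b (n + 1) := by
  unfold Sval
  have e1 : a + 1 + b + n + 1 = a + b + n + 2 := by omega
  have e2 : a + (b + 1) + n + 1 = a + b + n + 2 := by omega
  have e3 : a + 1 + b + 1 = a + b + 2 := by omega
  have e4 : a + (b + 1) + 1 = a + b + 2 := by omega
  have e5 : a + b + (n + 1) + 1 = a + b + n + 2 := by omega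
  rw [e1, e2, e3, e4, e5]
  have hf2 : ((a + b + 2).factorial : ℝ) = (a + b + 2) * (a + b + 1).factorial := by
    rw [show a + b + 2 = (a + b + 1) + 1 from rfl, Nat.factorial_succ]
    push_cast; ring
  have hfa : ((a + 1).factorial : ℝ) = (a + 1) * a.factorial := by
    rw [Nat.factorial_succ]; push_cast; ring
  have hfb : ((b + 1).factorial : ℝ) = (b + 1) * b.factorial := by
    rw [Nat.factorial_succ]; push_cast; ring
  have h1 : ((a + b + 1).factorial : ℝ) ≠ 0 := by exact_mod_cast Nat.factorial_ne_zero _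
  have h2 : ((a + b + 2) : ℝ) ≠ 0 := by positivity
  rw [hf2, hfa, hfb]
  field_simp
  ring

lemma sh_G : ∀ (w : Word) (a b : ℕ),
    shuffleFn (G a) (G b) w
      = if w = List.replicate w.length (1 : Fin 2) then Sval a b w.length else 0
  | [], a, b => by
      rw [shuffleFn_nil]
      show G a [] * G b [] = _
      simp [G, Sval_zero]
  | (0 : Fin 2) :: w, a, b => by
      rw [shuffleFn_cons, lshift_zero_G, lshift_zero_G, sh_zero_left, sh_zero_right, if_neg]
      · ring
      · simp [List.replicate_succ]
  | (1 : Fin 2) :: w, a, b => by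
      rw [shuffleFn_cons, lshift_one_G, lshift_one_G, sh_G w (a + 1) b, sh_G w a (b + 1)]
      have hc : ((1 : Fin 2) :: w = List.replicate ((1 :: w : Word)).length 1)
          ↔ (w = List.replicate w.length 1) := by
        simp [List.replicate_succ]
      by_cases h : w = List.replicate w.length (1 : Fin 2)
      · rw [if_pos h, if_pos h, if_pos (hc.mpr h), Sval_rec]
        rfl
      · rw [if_neg h, if_neg h, if_neg (fun hh => h (hc.mp hh)), add_zero]

lemma fer_square : sh ferfera ferfera = lshift 1 ferfera := by
  rw [ferfera_eq_G, lshift_one_G]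
  funext w
  show shuffleFn (G 0) (G 0) w = G 1 w
  rw [sh_G w 0 0]
  unfold G
  by_cases h : w = List.replicate w.length (1 : Fin 2)
  · rw [if_pos h, if_pos h]
    unfold Sval
    norm_num
  · rw [if_neg h, if_neg h]

lemma lshift_zero_fer : lshift 0 ferfera = 0 := by
  rw [ferfera_eq_G, lshift_zero_G]

end Paper

open Paper in
/-- Let `c = Σ_{k≥0} k! x1^k` be the Ferfera series and let
`e := (−c)^{∘−1}` be defined by `δ + e` being the group inverse of `δ + (−c)` in the
output feedback group.  Then `e` satisfies the shuffle equation
`e = ∅ + x0 (e ⧢ e ⧢ e) + x1 (e ⧢ e)`; equivalently `x0⁻¹(e) = e^{⧢3}`,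
`x1⁻¹(e) = e^{⧢2}` and `⟨e, ∅⟩ = 1`. -/
theorem ferfera_inverse_shuffle_equation (e : Series)
    (hinv : gop (-ferfera) e = 0 ∧ gop e (-ferfera) = 0) :
    (e = ind [] + lconcat 0 (sh (sh e e) e) + lconcat 1 (sh e e)) ∧
    lshift 0 e = sh (sh e e) e ∧ lshift 1 e = sh e e ∧ e [] = 1 := by
  have he : e = mcomp ferfera e := by
    have h := hinv.1
    rw [gop, mcomp_neg] at h
    exact add_neg_eq_zero.mp h
  have hsq : mcomp (lshift 1 ferfera) e = sh e e := by
    rw [← fer_square]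
    funext u
    rw [← mcomp_hom e u.length u le_rfl ferfera ferfera, ← he]
    rfl
  have h1 : lshift 1 e = sh e e := by
    funext w
    show e (1 :: w) = sh e e w
    conv_lhs => rw [he]
    rw [mcomp_cons_one, hsq]
  have h0 : lshift 0 e = sh (sh e e) e := by
    funext w
    show e (0 :: w) = sh (sh e e) e w
    conv_lhs => rw [he]
    rw [mcomp_cons_zero, lshift_zero_fer, mcomp_zero_left, hsq]
    show (0 : Series) w + shuffleFn e (sh e e) w = shuffleFn (sh e e) e w
    rw [Pi.zero_apply, zero_add, sh_comm]
  have hε : e [] = 1 := by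
    conv_lhs => rw [he]
    rw [mcomp_nil]
    simp [ferfera]
  refine ⟨?_, h0, h1, hε⟩
  funext w
  match w with
  | [] =>
      show e [] = ind [] [] + lconcat 0 (sh (sh e e) e) []
        + lconcat 1 (sh e e) []
      rw [hε]
      show (1 : ℝ) = (if ([] : Word) = [] then (1:ℝ) else 0) + 0 + 0
      norm_num
  | (0 : Fin 2) :: v =>
      show e (0 :: v) = ind [] (0 :: v) + lconcat 0 (sh (sh e e) e) (0 :: v)
        + lconcat 1 (sh e e) (0 :: v)
      rw [show e (0 :: v) = sh (sh e e) e v from congrFun h0 v]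
      simp [ind, lconcat]
  | (1 : Fin 2) :: v =>
      show e (1 :: v) = ind [] (1 :: v) + lconcat 0 (sh (sh e e) e) (1 :: v)
        + lconcat 1 (sh e e) (1 :: v)
      rw [show e (1 :: v) = sh e e v from congrFun h1 v]
      simp [ind, lconcat]
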